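/- A linear constant-coefficient system y'' = A·y' + B·y (A, B constant n×n complex matrices) has vanishing Fels torsion if and only if B + (1/4)A² is a scalar multiple of the identity. -/

import Mathlib

open Finset in
/-- partial derivative in `x` -/
noncomputable def Px {n : ℕ} (g : ℂ → (Fin n → ℂ) → (Fin n → ℂ) → ℂ)
    (x : ℂ) (v w : Fin n → ℂ) : ℂ :=
  deriv (fun t => g t v w) x

/-- partial derivative in `yᴶ` -/
noncomputable def Py {n : ℕ} (J : Fin n) (g : ℂ → (Fin n → ℂ) → (Fin n → ℂ) → ℂ)
    (x : ℂ) (v w : Fin n → ℂ) : ℂ :=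
  deriv (fun t => g x (Function.update v J t) w) (v J)

/-- partial derivative in `ẏᴶ` -/
noncomputable def Pyd {n : ℕ} (J : Fin n) (g : ℂ → (Fin n → ℂ) → (Fin n → ℂ) → ℂ)
    (x : ℂ) (v w : Fin n → ℂ) : ℂ :=
  deriv (fun t => g x v (Function.update w J t)) (w J)

/-- total derivative d/dx along solutions of the system y'' = f(x,y,ẏ) -/
noncomputable def Dx {n : ℕ} (f : ℂ → (Fin n → ℂ) → (Fin n → ℂ) → Fin n → ℂ)
    (g : ℂ → (Fin n → ℂ) → (Fin n → ℂ) → ℂ)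
    (x : ℂ) (v w : Fin n → ℂ) : ℂ :=
  Px g x v w + ∑ K, w K * Py K g x v w + ∑ K, f x v w K * Pyd K g x v w

/-- φᴵ_J = (1/2)(d/dx)(∂fᴵ/∂ẏᴶ) − ∂fᴵ/∂yᴶ − (1/4)∑_K (∂fᴵ/∂ẏᴷ)(∂fᴷ/∂ẏᴶ) -/
noncomputable def phi {n : ℕ} (f : ℂ → (Fin n → ℂ) → (Fin n → ℂ) → Fin n → ℂ)
    (I J : Fin n) (x : ℂ) (v w : Fin n → ℂ) : ℂ :=
  (1 / 2) * Dx f (fun a b c => Pyd J (fun a b c => f a b c I) a b c) x v w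
    - Py J (fun a b c => f a b c I) x v w
    - (1 / 4) * ∑ K, Pyd K (fun a b c => f a b c I) x v w
        * Pyd J (fun a b c => f a b c K) x v w

/-- the Fels torsion Φᴵ_J = φᴵ_J − (1/n)·φᴷ_K·δᴵ_J -/
noncomputable def fels {n : ℕ} (f : ℂ → (Fin n → ℂ) → (Fin n → ℂ) → Fin n → ℂ)
    (I J : Fin n) (x : ℂ) (v w : Fin n → ℂ) : ℂ :=
  phi f I J x v w - (1 / (n : ℂ)) * (∑ K, phi f K K x v w)
    * (if I = J then 1 else 0)

section
variable {n : ℕ} (A B : Matrix (Fin n) (Fin n) ℂ)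

lemma sum_update (c w : Fin n → ℂ) (J : Fin n) (t : ℂ) :
    ∑ K, c K * Function.update w J t K
      = c J * t + ∑ K ∈ Finset.univ.erase J, c K * w K := by
  rw [← Finset.add_sum_erase _ _ (Finset.mem_univ J)]
  congr 1
  · simp
  · exact Finset.sum_congr rfl fun K hK => by
      rw [Function.update_of_ne (Finset.ne_of_mem_erase hK)]

lemma deriv_lin (c C t : ℂ) : deriv (fun s => c * s + C) t = c := by
  simpa using (((hasDerivAt_id t).const_mul c).add_const C).deriv

noncomputable def flin : ℂ → (Fin n → ℂ) → (Fin n → ℂ) → Fin n → ℂ :=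
  fun _ v w I => (∑ K, A I K * w K) + ∑ K, B I K * v K

lemma pyd_lin (I J : Fin n) (x : ℂ) (v w : Fin n → ℂ) :
    Pyd J (fun a b c => flin A B a b c I) x v w = A I J := by
  unfold Pyd flin
  have h : (fun t => (∑ K, A I K * Function.update w J t K) + ∑ K, B I K * v K)
      = fun t => A I J * t
        + ((∑ K ∈ Finset.univ.erase J, A I K * w K) + ∑ K, B I K * v K) := by
    funext t; rw [sum_update]; ring
  rw [h, deriv_lin]

lemma py_lin (I J : Fin n) (x : ℂ) (v w : Fin n → ℂ) :
    Py J (fun a b c => flin A B a b c I) x v w = B I J := by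
  unfold Py flin
  have h : (fun t => (∑ K, A I K * w K) + ∑ K, B I K * Function.update v J t K)
      = fun t => B I J * t
        + ((∑ K ∈ Finset.univ.erase J, B I K * v K) + ∑ K, A I K * w K) := by
    funext t; rw [sum_update]; ring
  rw [h, deriv_lin]

lemma phi_lin (I J : Fin n) (x : ℂ) (v w : Fin n → ℂ) :
    phi (flin A B) I J x v w
      = -(B I J + (1 / 4) * ∑ K, A I K * A K J) := by
  unfold phi
  have hc : (fun a b c => Pyd J (fun a b c => flin A B a b c I) a b c)
      = fun _ _ _ => A I J := by
    funext a b c; exact pyd_lin A B I J a b c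
  rw [hc]
  have hdx : Dx (flin A B) (fun _ _ _ => A I J) x v w = 0 := by
    unfold Dx Px Py Pyd
    simp
  rw [hdx, py_lin]
  simp only [pyd_lin]
  ring

lemma fels_lin (I J : Fin n) (x : ℂ) (v w : Fin n → ℂ) :
    fels (flin A B) I J x v w
      = -(B I J + (1 / 4) * ∑ K, A I K * A K J)
        + (1 / (n : ℂ)) * (∑ K, (B K K + (1 / 4) * ∑ L, A K L * A L K))
          * (if I = J then 1 else 0) := by
  unfold fels
  simp only [phi_lin]
  rw [Finset.sum_neg_distrib]
  split_ifs with h <;> ring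

end

/-- A linear constant-coefficient system y'' = A·y' + B·y has vanishing Fels
torsion iff B + (1/4)A² is a scalar multiple of the identity. -/
theorem fels_torsion_linear_system_iff
    (n : ℕ) (hn : 2 ≤ n) (A B : Matrix (Fin n) (Fin n) ℂ) :
    (∀ (I J : Fin n) (x : ℂ) (v w : Fin n → ℂ),
        fels (fun _ v w I => (∑ K, A I K * w K) + ∑ K, B I K * v K)
          I J x v w = 0)
      ↔ ∃ a : ℂ, B + (1 / 4 : ℂ) • (A * A)
          = a • (1 : Matrix (Fin n) (Fin n) ℂ) := by
  have hn0 : (n : ℂ) ≠ 0 := Nat.cast_ne_zero.mpr (by omega)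
  have hflin : (fun _ v w I => (∑ K, A I K * w K) + ∑ K, B I K * v K) = flin A B := rfl
  constructor
  · intro h
    refine ⟨(1 / (n : ℂ)) * ∑ K, (B K K + (1 / 4) * ∑ L, A K L * A L K), ?_⟩
    ext I J
    have hIJ := h I J 0 0 0
    rw [hflin, fels_lin] at hIJ
    simp only [Matrix.add_apply, Matrix.smul_apply, Matrix.mul_apply, Matrix.one_apply,
      smul_eq_mul]
    rcases eq_or_ne I J with rfl | hne
    · simp only [eq_self_iff_true, if_true, if_pos rfl, mul_one] at hIJ ⊢
      linear_combination -hIJ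
    · simp only [if_neg hne, mul_zero] at hIJ ⊢
      linear_combination -hIJ
  · rintro ⟨a, ha⟩ I J x v w
    have hae : ∀ I J, B I J + (1 / 4) * ∑ K, A I K * A K J
        = a * (if I = J then 1 else 0) := by
      intro I J
      have := congrFun (congrFun ha I) J
      simpa [Matrix.add_apply, Matrix.smul_apply, Matrix.mul_apply, Matrix.one_apply,
        smul_eq_mul] using this
    rw [hflin, fels_lin]
    have hT : (∑ K, (B K K + (1 / 4) * ∑ L, A K L * A L K)) = (n : ℂ) * a := by
      rw [Finset.sum_congr rfl fun K _ => hae K K]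
      simp [mul_comm]
    rw [hT, hae]
    rcases eq_or_ne I J with rfl | hne
    · simp only [if_pos rfl, mul_one]
      field_simp
      simp
    · simp [hne]
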